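/- For every x ∈ (0,L) and every t > 0, the function c̄ is differentiable in time and twice differentiable in space at (x,t), and it satisfies the diffusion equation ∂c̄/∂t (x,t) = D ∂²c̄/∂x² (x,t). -/

import Mathlib

set_option maxHeartbeats 1000000

open Real

private lemma summable_exp_sq (b : ℝ) (hb : 0 < b) :
    Summable fun n : ℕ => Real.exp (-(b * ((n : ℝ) + 1) ^ 2)) := by
  refine Summable.of_nonneg_of_le (fun n => (Real.exp_pos _).le) (fun n => ?_)
    (Real.summable_exp_nat_mul_iff.2 (neg_lt_zero.2 hb))
  apply Real.exp_le_exp.2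
  have hn : (0 : ℝ) ≤ (n : ℝ) := n.cast_nonneg
  nlinarith [mul_pos hb (show (0:ℝ) < (n:ℝ)^2 + (n:ℝ) + 1 by positivity)]

private lemma norm_mul_bound {a e A E : ℝ} (ha : |a| ≤ A) (he0 : 0 ≤ e) (he : e ≤ E) :
    ‖a * e‖ ≤ A * E := by
  rw [Real.norm_eq_abs, abs_mul, abs_of_nonneg he0]
  nlinarith [abs_nonneg a, le_trans he0 he]

theorem stmt_7 (L D β cI : ℝ) (hL : 0 < L) (hD : 0 < D)
    (cbar : ℝ × ℝ → ℝ)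
    (hcbar : ∀ x t : ℝ, cbar (x, t) =
      cI - β * x * (1 - x / (2 * L)) + β * D * t / L +
        2 * β * L * (1 / 6 -
          ∑' n : ℕ, (1 / (((n : ℝ) + 1) ^ 2 * Real.pi ^ 2)) *
            Real.cos (((n : ℝ) + 1) * Real.pi * x / L) *
            Real.exp (-((((n : ℝ) + 1) * Real.pi / L) ^ 2 * D * t))) ) :
    ∀ x : ℝ, 0 < x → x < L → ∀ t : ℝ, 0 < t →
      DifferentiableAt ℝ (fun τ : ℝ => cbar (x, τ)) t ∧
      DifferentiableAt ℝ (fun y : ℝ => cbar (y, t)) x ∧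
      DifferentiableAt ℝ (fun y : ℝ => deriv (fun z : ℝ => cbar (z, t)) y) x ∧
      deriv (fun τ : ℝ => cbar (x, τ)) t =
        D * deriv (fun y : ℝ => deriv (fun z : ℝ => cbar (z, t)) y) x := by
  intro x hx0 hxL t ht
  have hπ : (0:ℝ) < Real.pi := Real.pi_pos
  have hL0 : L ≠ 0 := ne_of_gt hL
  have hπ0 : Real.pi ≠ 0 := ne_of_gt hπ
  have hP : ∀ n : ℕ, (1:ℝ) ≤ (n:ℝ) + 1 := fun n => by
    have := n.cast_nonneg (α := ℝ); linarith
  set b : ℝ := (Real.pi / L)^2 * D * t with hb_def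
  have hb : 0 < b := by positivity
  set b2 : ℝ := (Real.pi / L)^2 * D * (t/2) with hb2_def
  have hb2 : 0 < b2 := by positivity
  have hsumExp : Summable fun n : ℕ => Real.exp (-(b * ((n:ℝ)+1)^2)) := summable_exp_sq b hb
  have hsumExp2 : Summable fun n : ℕ => Real.exp (-(b2 * ((n:ℝ)+1)^2)) := summable_exp_sq b2 hb2
  have hEeq : ∀ n : ℕ, Real.exp (-((((n:ℝ)+1)*Real.pi/L)^2 * D * t))
      = Real.exp (-(b * ((n:ℝ)+1)^2)) := fun n => congrArg Real.exp (by rw [hb_def]; ring)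
  have heτ : ∀ (n : ℕ) (τ : ℝ), t/2 ≤ τ →
      Real.exp (-((((n:ℝ)+1)*Real.pi/L)^2 * D * τ)) ≤ Real.exp (-(b2 * ((n:ℝ)+1)^2)) := by
    intro n τ hτ
    apply Real.exp_le_exp.2
    have hq : 0 ≤ (((n:ℝ)+1)*Real.pi/L)^2 * D := by positivity
    have h1 : b2 * ((n:ℝ)+1)^2 = ((((n:ℝ)+1)*Real.pi/L)^2 * D) * (t/2) := by
      rw [hb2_def]; ring
    rw [h1]
    nlinarith [mul_le_mul_of_nonneg_left hτ hq]
  -- abs bounds for the non-exponential parts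
  have habs0 : ∀ (n:ℕ) (y:ℝ),
      |1 / (((n:ℝ)+1)^2 * Real.pi^2) * Real.cos (((n:ℝ)+1)*Real.pi*y/L)| ≤ 1/Real.pi^2 := by
    intro n y
    have hC0 : (0:ℝ) ≤ 1 / (((n:ℝ)+1)^2 * Real.pi^2) := by positivity
    rw [abs_mul, abs_of_nonneg hC0]
    have hP2 : (1:ℝ) ≤ ((n:ℝ)+1)^2 := by nlinarith [hP n]
    have h1 : 1 / (((n:ℝ)+1)^2 * Real.pi^2) ≤ 1/Real.pi^2 := by
      apply one_div_le_one_div_of_le (by positivity)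
      nlinarith [mul_pos hπ hπ]
    nlinarith [abs_cos_le_one (((n:ℝ)+1)*Real.pi*y/L), abs_nonneg (Real.cos (((n:ℝ)+1)*Real.pi*y/L))]
  have habsT : ∀ n : ℕ,
      |(-(D/L^2)) * Real.cos (((n:ℝ)+1)*Real.pi*x/L)| ≤ D/L^2 := by
    intro n
    rw [abs_mul, abs_neg, abs_of_nonneg (show (0:ℝ) ≤ D/L^2 by positivity)]
    nlinarith [abs_cos_le_one (((n:ℝ)+1)*Real.pi*x/L),
      abs_nonneg (Real.cos (((n:ℝ)+1)*Real.pi*x/L)),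
      div_nonneg hD.le (sq_nonneg L)]
  have habs1 : ∀ (n:ℕ) (y:ℝ),
      |1 / (((n:ℝ)+1)^2 * Real.pi^2) *
        (-Real.sin (((n:ℝ)+1)*Real.pi*y/L) * (((n:ℝ)+1)*Real.pi/L))| ≤ 1/(Real.pi*L) := by
    intro n y
    have hn0 : ((n:ℝ)+1) ≠ 0 := by positivity
    have hk0 : (0:ℝ) ≤ ((n:ℝ)+1)*Real.pi/L := by positivity
    have hC0 : (0:ℝ) ≤ 1 / (((n:ℝ)+1)^2 * Real.pi^2) := by positivity
    rw [abs_mul, abs_of_nonneg hC0, abs_mul, abs_neg, abs_of_nonneg hk0]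
    have heq : 1 / (((n:ℝ)+1)^2 * Real.pi^2) * (((n:ℝ)+1)*Real.pi/L)
        = 1 / (((n:ℝ)+1) * (Real.pi * L)) := by field_simp
    have hs : |Real.sin (((n:ℝ)+1)*Real.pi*y/L)| * (((n:ℝ)+1)*Real.pi/L)
        ≤ ((n:ℝ)+1)*Real.pi/L := by
      nlinarith [abs_sin_le_one (((n:ℝ)+1)*Real.pi*y/L),
        abs_nonneg (Real.sin (((n:ℝ)+1)*Real.pi*y/L))]
    calc 1 / (((n:ℝ)+1)^2 * Real.pi^2) * (|Real.sin (((n:ℝ)+1)*Real.pi*y/L)| * (((n:ℝ)+1)*Real.pi/L))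
        ≤ 1 / (((n:ℝ)+1)^2 * Real.pi^2) * (((n:ℝ)+1)*Real.pi/L) :=
          mul_le_mul_of_nonneg_left hs hC0
      _ = 1 / (((n:ℝ)+1) * (Real.pi * L)) := heq
      _ ≤ 1/(Real.pi*L) := by
          apply one_div_le_one_div_of_le (by positivity)
          nlinarith [hP n, mul_pos hπ hL]
  have habs2 : ∀ (n:ℕ) (y:ℝ),
      |(-(1/L^2)) * Real.cos (((n:ℝ)+1)*Real.pi*y/L)| ≤ 1/L^2 := by
    intro n y
    rw [abs_mul, abs_neg, abs_of_nonneg (show (0:ℝ) ≤ 1/L^2 by positivity)]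
    nlinarith [abs_cos_le_one (((n:ℝ)+1)*Real.pi*y/L),
      abs_nonneg (Real.cos (((n:ℝ)+1)*Real.pi*y/L)),
      one_div_nonneg.2 (sq_nonneg L)]
  -- per-term derivatives
  have hdt : ∀ (n : ℕ) (τ : ℝ), HasDerivAt
      (fun τ : ℝ => 1 / (((n:ℝ)+1)^2 * Real.pi^2) * Real.cos (((n:ℝ)+1)*Real.pi*x/L) *
        Real.exp (-((((n:ℝ)+1)*Real.pi/L)^2 * D * τ)))
      ((-(D/L^2)) * Real.cos (((n:ℝ)+1)*Real.pi*x/L) *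
        Real.exp (-((((n:ℝ)+1)*Real.pi/L)^2 * D * τ))) τ := by
    intro n τ
    have hn0 : ((n:ℝ)+1) ≠ 0 := by positivity
    have h1 : HasDerivAt (fun τ : ℝ => -((((n:ℝ)+1)*Real.pi/L)^2 * D * τ))
        (-((((n:ℝ)+1)*Real.pi/L)^2 * D)) τ := by
      simpa using ((hasDerivAt_id τ).const_mul ((((n:ℝ)+1)*Real.pi/L)^2 * D)).fun_neg
    have h2 := h1.exp.const_mul
      (1 / (((n:ℝ)+1)^2 * Real.pi^2) * Real.cos (((n:ℝ)+1)*Real.pi*x/L))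
    refine h2.congr_deriv ?_
    field_simp
  have hdx1 : ∀ (n : ℕ) (y : ℝ), HasDerivAt
      (fun y : ℝ => 1 / (((n:ℝ)+1)^2 * Real.pi^2) * Real.cos (((n:ℝ)+1)*Real.pi*y/L) *
        Real.exp (-((((n:ℝ)+1)*Real.pi/L)^2 * D * t)))
      (1 / (((n:ℝ)+1)^2 * Real.pi^2) *
        (-Real.sin (((n:ℝ)+1)*Real.pi*y/L) * (((n:ℝ)+1)*Real.pi/L)) *
        Real.exp (-((((n:ℝ)+1)*Real.pi/L)^2 * D * t))) y := by
    intro n y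
    have hk : HasDerivAt (fun y : ℝ => ((n:ℝ)+1)*Real.pi*y/L) (((n:ℝ)+1)*Real.pi/L) y := by
      simpa using ((hasDerivAt_id y).const_mul (((n:ℝ)+1)*Real.pi)).div_const L
    exact (hk.cos.const_mul _).mul_const _
  have hdx2 : ∀ (n : ℕ) (y : ℝ), HasDerivAt
      (fun y : ℝ => 1 / (((n:ℝ)+1)^2 * Real.pi^2) *
        (-Real.sin (((n:ℝ)+1)*Real.pi*y/L) * (((n:ℝ)+1)*Real.pi/L)) *
        Real.exp (-((((n:ℝ)+1)*Real.pi/L)^2 * D * t)))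
      ((-(1/L^2)) * Real.cos (((n:ℝ)+1)*Real.pi*y/L) *
        Real.exp (-((((n:ℝ)+1)*Real.pi/L)^2 * D * t))) y := by
    intro n y
    have hn0 : ((n:ℝ)+1) ≠ 0 := by positivity
    have hk : HasDerivAt (fun y : ℝ => ((n:ℝ)+1)*Real.pi*y/L) (((n:ℝ)+1)*Real.pi/L) y := by
      simpa using ((hasDerivAt_id y).const_mul (((n:ℝ)+1)*Real.pi)).div_const L
    have h2 := ((hk.sin.neg.mul_const (((n:ℝ)+1)*Real.pi/L)).const_mul
      (1 / (((n:ℝ)+1)^2 * Real.pi^2))).mul_const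
      (Real.exp (-((((n:ℝ)+1)*Real.pi/L)^2 * D * t)))
    refine h2.congr_deriv ?_
    field_simp
  -- summability of the series at the point x (both for the series itself and first derivative)
  have hsum0 : Summable fun n : ℕ =>
      1 / (((n:ℝ)+1)^2 * Real.pi^2) * Real.cos (((n:ℝ)+1)*Real.pi*x/L) *
        Real.exp (-((((n:ℝ)+1)*Real.pi/L)^2 * D * t)) := by
    apply Summable.of_norm_bounded (hsumExp.mul_left (1/Real.pi^2))
    intro n
    exact norm_mul_bound (habs0 n x) (Real.exp_pos _).le (le_of_eq (hEeq n))
  have hsumg' : Summable fun n : ℕ =>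
      1 / (((n:ℝ)+1)^2 * Real.pi^2) *
        (-Real.sin (((n:ℝ)+1)*Real.pi*x/L) * (((n:ℝ)+1)*Real.pi/L)) *
        Real.exp (-((((n:ℝ)+1)*Real.pi/L)^2 * D * t)) := by
    apply Summable.of_norm_bounded (hsumExp.mul_left (1/(Real.pi*L)))
    intro n
    exact norm_mul_bound (habs1 n x) (Real.exp_pos _).le (le_of_eq (hEeq n))
  -- the three series derivatives
  have Ht : HasDerivAt (fun τ : ℝ => ∑' n : ℕ,
      1 / (((n:ℝ)+1)^2 * Real.pi^2) * Real.cos (((n:ℝ)+1)*Real.pi*x/L) *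
        Real.exp (-((((n:ℝ)+1)*Real.pi/L)^2 * D * τ)))
      (∑' n : ℕ, (-(D/L^2)) * Real.cos (((n:ℝ)+1)*Real.pi*x/L) *
        Real.exp (-((((n:ℝ)+1)*Real.pi/L)^2 * D * t))) t := by
    refine hasDerivAt_tsum_of_isPreconnected (y₀ := t) (t := Set.Ioi (t/2)) (hsumExp2.mul_left (D/L^2)) isOpen_Ioi
      isPreconnected_Ioi (fun n τ _ => hdt n τ) (fun n τ hτ => ?_) ?_ ?_ ?_
    · exact norm_mul_bound (habsT n) (Real.exp_pos _).le (heτ n τ (le_of_lt hτ))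
    · show t ∈ Set.Ioi (t/2); simp [Set.mem_Ioi]; linarith
    · exact hsum0
    · show t ∈ Set.Ioi (t/2); simp [Set.mem_Ioi]; linarith
  have Hx1 : ∀ y : ℝ, HasDerivAt (fun z : ℝ => ∑' n : ℕ,
      1 / (((n:ℝ)+1)^2 * Real.pi^2) * Real.cos (((n:ℝ)+1)*Real.pi*z/L) *
        Real.exp (-((((n:ℝ)+1)*Real.pi/L)^2 * D * t)))
      (∑' n : ℕ, 1 / (((n:ℝ)+1)^2 * Real.pi^2) *
        (-Real.sin (((n:ℝ)+1)*Real.pi*y/L) * (((n:ℝ)+1)*Real.pi/L)) *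
        Real.exp (-((((n:ℝ)+1)*Real.pi/L)^2 * D * t))) y := by
    intro y
    refine hasDerivAt_tsum (hsumExp.mul_left (1/(Real.pi*L))) hdx1 (fun n z => ?_) hsum0 y
    exact norm_mul_bound (habs1 n z) (Real.exp_pos _).le (le_of_eq (hEeq n))
  have Hx2 : HasDerivAt (fun y : ℝ => ∑' n : ℕ,
      1 / (((n:ℝ)+1)^2 * Real.pi^2) *
        (-Real.sin (((n:ℝ)+1)*Real.pi*y/L) * (((n:ℝ)+1)*Real.pi/L)) *
        Real.exp (-((((n:ℝ)+1)*Real.pi/L)^2 * D * t)))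
      (∑' n : ℕ, (-(1/L^2)) * Real.cos (((n:ℝ)+1)*Real.pi*x/L) *
        Real.exp (-((((n:ℝ)+1)*Real.pi/L)^2 * D * t))) x := by
    refine hasDerivAt_tsum (hsumExp.mul_left (1/L^2)) hdx2 (fun n z => ?_) hsumg' x
    exact norm_mul_bound (habs2 n z) (Real.exp_pos _).le (le_of_eq (hEeq n))
  -- function rewrites
  have hfunt : (fun τ : ℝ => cbar (x, τ)) = (fun τ : ℝ =>
      cI - β * x * (1 - x / (2 * L)) + β * D * τ / L +
        2 * β * L * (1 / 6 - ∑' n : ℕ, (1 / (((n : ℝ) + 1) ^ 2 * Real.pi ^ 2)) *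
          Real.cos (((n : ℝ) + 1) * Real.pi * x / L) *
          Real.exp (-((((n : ℝ) + 1) * Real.pi / L) ^ 2 * D * τ)))) :=
    funext fun τ => hcbar x τ
  have hfunx : (fun y : ℝ => cbar (y, t)) = (fun y : ℝ =>
      cI - β * y * (1 - y / (2 * L)) + β * D * t / L +
        2 * β * L * (1 / 6 - ∑' n : ℕ, (1 / (((n : ℝ) + 1) ^ 2 * Real.pi ^ 2)) *
          Real.cos (((n : ℝ) + 1) * Real.pi * y / L) *
          Real.exp (-((((n : ℝ) + 1) * Real.pi / L) ^ 2 * D * t)))) :=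
    funext fun y => hcbar y t
  -- full time derivative
  have HA : HasDerivAt (fun τ : ℝ => β*D*τ/L) (β*D/L) t := by
    simpa using ((hasDerivAt_id t).const_mul (β*D)).div_const L
  have HTfull : HasDerivAt (fun τ : ℝ =>
      cI - β * x * (1 - x / (2 * L)) + β * D * τ / L +
        2 * β * L * (1 / 6 - ∑' n : ℕ, (1 / (((n : ℝ) + 1) ^ 2 * Real.pi ^ 2)) *
          Real.cos (((n : ℝ) + 1) * Real.pi * x / L) *
          Real.exp (-((((n : ℝ) + 1) * Real.pi / L) ^ 2 * D * τ))))
      (0 + β*D/L + 2*β*L * (-(∑' n : ℕ, (-(D/L^2)) * Real.cos (((n:ℝ)+1)*Real.pi*x/L) *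
        Real.exp (-((((n:ℝ)+1)*Real.pi/L)^2 * D * t))))) t :=
    ((hasDerivAt_const t (cI - β * x * (1 - x / (2 * L)))).add HA).add
      ((Ht.const_sub (1/6)).const_mul (2*β*L))
  -- full space derivative (at every y)
  have HXfull : ∀ y : ℝ, HasDerivAt (fun z : ℝ =>
      cI - β * z * (1 - z / (2 * L)) + β * D * t / L +
        2 * β * L * (1 / 6 - ∑' n : ℕ, (1 / (((n : ℝ) + 1) ^ 2 * Real.pi ^ 2)) *
          Real.cos (((n : ℝ) + 1) * Real.pi * z / L) *
          Real.exp (-((((n : ℝ) + 1) * Real.pi / L) ^ 2 * D * t))))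
      (-(β * (1 - y/(2*L)) + β * y * (-(1/(2*L)))) +
        2*β*L * (-(∑' n : ℕ, 1 / (((n:ℝ)+1)^2 * Real.pi^2) *
          (-Real.sin (((n:ℝ)+1)*Real.pi*y/L) * (((n:ℝ)+1)*Real.pi/L)) *
          Real.exp (-((((n:ℝ)+1)*Real.pi/L)^2 * D * t))))) y := by
    intro y
    have h1 : HasDerivAt (fun z : ℝ => β*z) β y := by
      simpa using (hasDerivAt_id y).const_mul β
    have h2 : HasDerivAt (fun z : ℝ => 1 - z/(2*L)) (-(1/(2*L))) y := by
      simpa using ((hasDerivAt_id y).div_const (2*L)).const_sub 1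
    exact ((h1.mul h2).const_sub cI).add_const (β*D*t/L) |>.add
      (((Hx1 y).const_sub (1/6)).const_mul (2*β*L))
  have hderiv_x : deriv (fun z : ℝ => cbar (z, t)) = fun y : ℝ =>
      -(β * (1 - y/(2*L)) + β * y * (-(1/(2*L)))) +
        2*β*L * (-(∑' n : ℕ, 1 / (((n:ℝ)+1)^2 * Real.pi^2) *
          (-Real.sin (((n:ℝ)+1)*Real.pi*y/L) * (((n:ℝ)+1)*Real.pi/L)) *
          Real.exp (-((((n:ℝ)+1)*Real.pi/L)^2 * D * t)))) := by
    funext y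
    rw [hfunx]
    exact (HXfull y).deriv
  -- second space derivative of the explicit first-derivative function
  have HX2full : HasDerivAt (fun y : ℝ =>
      -(β * (1 - y/(2*L)) + β * y * (-(1/(2*L)))) +
        2*β*L * (-(∑' n : ℕ, 1 / (((n:ℝ)+1)^2 * Real.pi^2) *
          (-Real.sin (((n:ℝ)+1)*Real.pi*y/L) * (((n:ℝ)+1)*Real.pi/L)) *
          Real.exp (-((((n:ℝ)+1)*Real.pi/L)^2 * D * t)))))
      (-(β * (-(1/(2*L))) + β * (-(1/(2*L)))) +
        2*β*L * (-(∑' n : ℕ, (-(1/L^2)) * Real.cos (((n:ℝ)+1)*Real.pi*x/L) *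
          Real.exp (-((((n:ℝ)+1)*Real.pi/L)^2 * D * t))))) x := by
    have h1 : HasDerivAt (fun y : ℝ => β*y) β x := by
      simpa using (hasDerivAt_id x).const_mul β
    have h2 : HasDerivAt (fun y : ℝ => 1 - y/(2*L)) (-(1/(2*L))) x := by
      simpa using ((hasDerivAt_id x).div_const (2*L)).const_sub 1
    exact ((h2.const_mul β).add (h1.mul_const (-(1/(2*L))))).neg.add
      (Hx2.neg.const_mul (2*β*L))
  refine ⟨?_, ?_, ?_, ?_⟩
  · rw [hfunt]; exact HTfull.differentiableAt
  · rw [hfunx]; exact (HXfull x).differentiableAt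
  · simp only [hderiv_x]; exact HX2full.differentiableAt
  · have e1 : deriv (fun τ : ℝ => cbar (x, τ)) t =
        0 + β*D/L + 2*β*L * (-(∑' n : ℕ, (-(D/L^2)) * Real.cos (((n:ℝ)+1)*Real.pi*x/L) *
          Real.exp (-((((n:ℝ)+1)*Real.pi/L)^2 * D * t)))) := by
      rw [hfunt]; exact HTfull.deriv
    have e2 : deriv (fun y : ℝ => deriv (fun z : ℝ => cbar (z, t)) y) x =
        -(β * (-(1/(2*L))) + β * (-(1/(2*L)))) +
          2*β*L * (-(∑' n : ℕ, (-(1/L^2)) * Real.cos (((n:ℝ)+1)*Real.pi*x/L) *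
            Real.exp (-((((n:ℝ)+1)*Real.pi/L)^2 * D * t)))) := by
      simp only [hderiv_x]; exact HX2full.deriv
    rw [e1, e2]
    have m1 : ∑' n : ℕ, (-(D/L^2)) * Real.cos (((n:ℝ)+1)*Real.pi*x/L) *
        Real.exp (-((((n:ℝ)+1)*Real.pi/L)^2 * D * t)) =
        (-(D/L^2)) * ∑' n : ℕ, Real.cos (((n:ℝ)+1)*Real.pi*x/L) *
        Real.exp (-((((n:ℝ)+1)*Real.pi/L)^2 * D * t)) := by
      simp_rw [mul_assoc]; exact tsum_mul_left
    have m2 : ∑' n : ℕ, (-(1/L^2)) * Real.cos (((n:ℝ)+1)*Real.pi*x/L) *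
        Real.exp (-((((n:ℝ)+1)*Real.pi/L)^2 * D * t)) =
        (-(1/L^2)) * ∑' n : ℕ, Real.cos (((n:ℝ)+1)*Real.pi*x/L) *
        Real.exp (-((((n:ℝ)+1)*Real.pi/L)^2 * D * t)) := by
      simp_rw [mul_assoc]; exact tsum_mul_left
    rw [m1, m2]
    generalize (∑' n : ℕ, Real.cos (((n:ℝ)+1)*Real.pi*x/L) *
        Real.exp (-((((n:ℝ)+1)*Real.pi/L)^2 * D * t))) = S
    field_simp
    ring
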